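/- Let n ≥ 1 and let λ ∈ ℝⁿ be weakly decreasing with λ_i − λ_{i+1} ≤ 1 for all 1 ≤ i ≤ n−1, and let m = (λ₁ + ⋯ + λ_n)/n be its mean. Then for every weakly decreasing z ∈ ℝⁿ one has ‖(λ − ρ) − m·𝟙‖ ≤ ‖(λ − ρ) − z‖ in the Euclidean norm; that is, the constant vector m·𝟙 is a nearest point to λ − ρ in the closed convex cone of weakly decreasing vectors. -/

import Mathlib

/-- The constant vector `m·𝟙` in Euclidean space. -/
noncomputable def constVec (n : ℕ) (m : ℝ) : EuclideanSpace ℝ (Fin n) := WithLp.toLp 2 (fun _ => m)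

/-- The Weyl vector `ρ` of `gl(n)`, with `i`-th coordinate `(n + 1 - 2i)/2`
(in 1-indexed notation). -/
noncomputable def rhoVec (n : ℕ) : EuclideanSpace ℝ (Fin n) :=
  WithLp.toLp 2 (fun i => ((n : ℝ) + 1 - 2 * ((i : ℕ) + 1)) / 2)

theorem mean_is_nearest_decreasing_for_lambda_sub_rho
    (n : ℕ) (hn : 1 ≤ n) (lam : EuclideanSpace ℝ (Fin n))
    (hdec : ∀ i j : Fin n, i ≤ j → lam j ≤ lam i)
    (hgap : ∀ i j : Fin n, (i : ℕ) + 1 = (j : ℕ) → lam i - lam j ≤ 1)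
    (m : ℝ) (hm : m = (∑ i, lam i) / n)
    (z : EuclideanSpace ℝ (Fin n)) (hz : ∀ i j : Fin n, i ≤ j → z j ≤ z i) :
    ‖(lam - rhoVec n) - constVec n m‖ ≤ ‖(lam - rhoVec n) - z‖ := by
  set x : Fin n → ℝ := fun i => lam i - rhoVec n i with hx
  -- x is monotone
  have hstep : ∀ i j : Fin n, (i : ℕ) + 1 = (j : ℕ) → x i ≤ x j := by
    intro i j hij
    have h1 := hgap i j hij
    have : rhoVec n i - rhoVec n j = 1 := by
      simp only [rhoVec]
      have : ((j : ℕ) : ℝ) = (i : ℕ) + 1 := by exact_mod_cast hij.symm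
      rw [this]; ring
    simp only [hx]
    linarith
  have hmono : ∀ i j : Fin n, i ≤ j → x i ≤ x j := by
    have key : ∀ d : ℕ, ∀ i j : Fin n, (i : ℕ) + d = (j : ℕ) → x i ≤ x j := by
      intro d
      induction d with
      | zero => intro i j h; have : i = j := Fin.ext (by omega); rw [this]
      | succ d ih =>
        intro i j h
        have hlt : (i : ℕ) + d < n := by have := j.isLt; omega
        let k : Fin n := ⟨(i : ℕ) + d, hlt⟩
        exact le_trans (ih i k rfl) (hstep k j (by simp [k]; omega))
    intro i j hij
    exact key ((j : ℕ) - (i : ℕ)) i j (by omega)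
  -- sum of rho is zero
  have hgauss : (∑ i ∈ Finset.range n, ((i : ℕ) : ℝ)) * 2 = (n : ℝ) * ((n : ℝ) - 1) := by
    have h := Finset.sum_range_id_mul_two n
    have := congrArg (Nat.cast : ℕ → ℝ) h
    push_cast [Nat.cast_sub hn] at this
    linarith
  have hrho : ∑ i, rhoVec n i = 0 := by
    simp only [rhoVec]
    have e : ∀ i : Fin n, ((n : ℝ) + 1 - 2 * ((i : ℕ) + 1)) / 2
        = ((n : ℝ) - 1) / 2 - ((i : ℕ) : ℝ) := fun i => by ring
    rw [Finset.sum_congr rfl (fun i _ => e i), Finset.sum_sub_distrib,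
      Finset.sum_const, Fin.sum_univ_eq_sum_range (fun i => ((i : ℕ) : ℝ))]
    simp only [Finset.card_univ, Fintype.card_fin, nsmul_eq_mul]
    linarith
  have hsumx : ∑ i, x i = n * m := by
    simp only [hx]
    rw [Finset.sum_sub_distrib, hrho, hm]
    field_simp
    simp
  -- Chebyshev: x and z antivary
  have hanti : Antivary x z := by
    intro i j hij
    by_contra h
    push_neg at h
    rcases le_or_gt i j with h' | h'
    · exact absurd (hz i j h') (not_le.mpr hij)
    · exact absurd (hmono j i h'.le) (not_le.mpr h)
  have cheb := hanti.card_mul_sum_le_sum_mul_sum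
  simp only [Finset.card_univ, Fintype.card_fin] at cheb
  have hkey : ∑ i, (x i - m) * z i ≤ 0 := by
    have h1 : ∑ i, (x i - m) * z i = ∑ i, x i * z i - m * ∑ i, z i := by
      rw [Finset.mul_sum, ← Finset.sum_sub_distrib]
      congr 1; ext i; ring
    rw [h1]
    have hn' : (0 : ℝ) < n := by exact_mod_cast hn
    rw [hsumx] at cheb
    nlinarith [cheb]
  -- inner product is nonnegative
  set c : EuclideanSpace ℝ (Fin n) := constVec n m with hc
  have hzero : ∑ i, (x i - m) = 0 := by
    rw [Finset.sum_sub_distrib, hsumx, Finset.sum_const]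
    simp only [Finset.card_univ, Fintype.card_fin, nsmul_eq_mul]
    ring
  have hinner : (0 : ℝ) ≤ inner ℝ ((lam - rhoVec n) - c) (c - z) := by
    rw [PiLp.inner_apply]
    have e1 : ∀ i : Fin n, inner ℝ (((lam - rhoVec n) - c) i) ((c - z) i)
        = m * (x i - m) - (x i - m) * z i := by
      intro i
      simp only [PiLp.sub_apply, hc, constVec, hx, RCLike.inner_apply, conj_trivial]
      ring
    rw [Finset.sum_congr rfl (fun i _ => e1 i), Finset.sum_sub_distrib,
      ← Finset.mul_sum, hzero]
    linarith [hkey]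
  -- conclude via norm expansion
  have hid : (lam - rhoVec n) - z = ((lam - rhoVec n) - c) + (c - z) := by abel
  rw [hid]
  have hsq := norm_add_sq_real ((lam - rhoVec n) - c) (c - z)
  nlinarith [norm_nonneg ((lam - rhoVec n) - c),
    norm_nonneg (((lam - rhoVec n) - c) + (c - z)), sq_nonneg ‖c - z‖, hinner, hsq]
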